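/- Let M be a flat semiumbilical surface in ℝ⁴, let c be the normal section with c·α = g, let e be a tangent field with ∇^⊤_X e = X for all tangent fields X, let t ∈ ℝ, and assume f = id + tc − (1−t)e : M → ℝ⁴ is an immersion with local inverse φ, so that f(M) is a surface with T_{f(p)}f(M) = N_pM and N_{f(p)}f(M) = T_pM. Let α̃ denote the second fundamental form of f(M). Then for every p ∈ M with q = f(p), for X_p ∈ N_q f(M) = T_pM, u_p, v_p ∈ T_q f(M) = N_pM and Y_p ∈ T_pM, one has ⟨X_p, α̃(u_p, v_p)⟩ = −⟨v_p, α(X_p, dφ(u_p))⟩ and ⟨X_p, α̃(df(Y_p), v_p)⟩ = −⟨v_p, α(X_p, Y_p)⟩. -/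

import Mathlib

/- Local framework: an immersed surface in ℝⁿ is given by a smooth parametrization
`ψ : Pl → Amb n` (`Pl = ℝ²` the parameter domain) whose differential is everywhere
injective.  Tangent/normal spaces, fundamental forms, connections, curvature ellipse,
(semi)umbilic and inflection points, flatness, etc. are defined from `ψ`. -/

noncomputable section
open scoped RealInnerProductSpace

/-- The parameter plane ℝ². -/
abbrev Pl := EuclideanSpace ℝ (Fin 2)
/-- Ambient Euclidean space ℝⁿ. -/
abbrev Amb (n : ℕ) := EuclideanSpace ℝ (Fin n)

/-- `ψ` is a smooth immersion. -/
def Immersion {n : ℕ} (ψ : Pl → Amb n) : Prop :=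
  ContDiff ℝ (⊤ : ℕ∞) ψ ∧ ∀ q, Function.Injective (fderiv ℝ ψ q)

/-- Tangent plane `T_pM` (as a linear subspace of the ambient space) at the point
with parameter `q`. -/
def Tang {n : ℕ} (ψ : Pl → Amb n) (q : Pl) : Submodule ℝ (Amb n) :=
  LinearMap.range (fderiv ℝ ψ q : Pl →ₗ[ℝ] Amb n)

/-- Normal space `N_pM = (T_pM)ᗮ`. -/
def Nor {n : ℕ} (ψ : Pl → Amb n) (q : Pl) : Submodule ℝ (Amb n) :=
  (Tang ψ q)ᗮ

/-- Tangential part `X ↦ X^⊤` of an ambient vector. -/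
def tproj {n : ℕ} (ψ : Pl → Amb n) (q : Pl) (x : Amb n) : Amb n :=
  (Submodule.orthogonalProjectionOnto (Tang ψ q) x : Amb n)

/-- Normal part `X ↦ X^⊥` of an ambient vector. -/
def nproj {n : ℕ} (ψ : Pl → Amb n) (q : Pl) (x : Amb n) : Amb n :=
  x - tproj ψ q x

/-- The second fundamental form `α` at the point of parameter `q`, evaluated on the
tangent vectors `dψ_q v`, `dψ_q w` (for parameter directions `v w : Pl`):
`α(dψ v, dψ w) = (D_{dψ v} (dψ w))^⊥ = (∂_v ∂_w ψ)^⊥`. -/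
def sff {n : ℕ} (ψ : Pl → Amb n) (q : Pl) (v w : Pl) : Amb n :=
  nproj ψ q (fderiv ℝ (fun x => fderiv ℝ ψ x w) q v)

/-- The curvature ellipse at `q`: image of `η(t) = α(t,t)` over the unit tangent
vectors `t = dψ_q v`. -/
def Ellipse {n : ℕ} (ψ : Pl → Amb n) (q : Pl) : Set (Amb n) :=
  {z | ∃ v : Pl, ‖fderiv ℝ ψ q v‖ = 1 ∧ z = sff ψ q v v}

/-- `q` is an umbilic point: the curvature ellipse degenerates to a point. -/
def Umbilic {n : ℕ} (ψ : Pl → Amb n) (q : Pl) : Prop :=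
  ∃ a : Amb n, Ellipse ψ q = {a}

/-- `q` is a semiumbilic point: the curvature ellipse lies in an affine line. -/
def Semiumbilic {n : ℕ} (ψ : Pl → Amb n) (q : Pl) : Prop :=
  ∃ a b : Amb n, Ellipse ψ q ⊆ {x | ∃ s : ℝ, x = a + s • b}

/-- `q` is a point of inflection: the curvature ellipse lies in a line through the
origin of the normal space. -/
def Inflection {n : ℕ} (ψ : Pl → Amb n) (q : Pl) : Prop :=
  ∃ b : Amb n, Ellipse ψ q ⊆ {x | ∃ s : ℝ, x = s • b}

/-- The surface is semiumbilical: every point is semiumbilic and not of inflection. -/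
def Semiumbilical {n : ℕ} (ψ : Pl → Amb n) : Prop :=
  ∀ q, Semiumbilic ψ q ∧ ¬ Inflection ψ q

/-- A smooth ambient-valued field which is everywhere tangent. -/
def TangentField {n : ℕ} (ψ : Pl → Amb n) (F : Pl → Amb n) : Prop :=
  ContDiff ℝ (⊤ : ℕ∞) F ∧ ∀ q, F q ∈ Tang ψ q

/-- A smooth ambient-valued field which is everywhere normal (a section of `NM`). -/
def NormalField {n : ℕ} (ψ : Pl → Amb n) (F : Pl → Amb n) : Prop :=
  ContDiff ℝ (⊤ : ℕ∞) F ∧ ∀ q, F q ∈ Nor ψ q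

/-- The tangent covariant derivative `∇^⊤ F = (D F)^⊤` of an ambient field `F`
along the `i`-th coordinate direction of the parameter plane. -/
def covT {n : ℕ} (ψ : Pl → Amb n) (F : Pl → Amb n) (i : Fin 2) (q : Pl) : Amb n :=
  tproj ψ q (fderiv ℝ F q (EuclideanSpace.single i (1:ℝ)))

/-- The tangent connection `∇^⊤` is flat: its curvature `R(∂₁,∂₂)` annihilates every
smooth tangent field (by tensoriality of the curvature this means `R = 0`, since the
coordinate fields `∂₁, ∂₂` commute and span). -/
def FlatSurface {n : ℕ} (ψ : Pl → Amb n) : Prop :=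
  ∀ F : Pl → Amb n, TangentField ψ F →
    ∀ q, covT ψ (covT ψ F 1) 0 q = covT ψ (covT ψ F 0) 1 q

/-- A tangent field is parallel: `∇^⊤ Y = (D Y)^⊤ = 0` in every tangent direction. -/
def ParallelT {n : ℕ} (ψ : Pl → Amb n) (F : Pl → Amb n) : Prop :=
  ∀ q (v : Pl), tproj ψ q (fderiv ℝ F q v) = 0

/-- A normal section is parallel: `∇^⊥ u = (D u)^⊥ = 0` in every tangent direction. -/
def ParallelN {n : ℕ} (ψ : Pl → Amb n) (F : Pl → Amb n) : Prop :=
  ∀ q (v : Pl), nproj ψ q (fderiv ℝ F q v) = 0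

/-- `c · α = g`: the normal section `c` satisfies `⟨c, α(X,Y)⟩ = ⟨X,Y⟩` for all
tangent vectors `X = dψ v`, `Y = dψ w`. -/
def CAG {n : ℕ} (ψ : Pl → Amb n) (c : Pl → Amb n) : Prop :=
  ∀ q (v w : Pl), (⟪c q, sff ψ q v w⟫) = ⟪fderiv ℝ ψ q v, fderiv ℝ ψ q w⟫

/-- `e` is a tangent field with `∇^⊤_X e = X` for every tangent vector `X = dψ v`. -/
def EulerField {n : ℕ} (ψ : Pl → Amb n) (e : Pl → Amb n) : Prop :=
  TangentField ψ e ∧ ∀ q (v : Pl), tproj ψ q (fderiv ℝ e q v) = fderiv ℝ ψ q v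

/-- `j` is the tangent field `½ grad⟨c,c⟩` (gradient with respect to the first
fundamental form): `⟨2 j, dψ v⟩ = d⟨c,c⟩(dψ v)` for every direction `v`. -/
def HalfGradCSq {n : ℕ} (ψ : Pl → Amb n) (c j : Pl → Amb n) : Prop :=
  TangentField ψ j ∧
    ∀ q (v : Pl), 2 * (⟪j q, fderiv ℝ ψ q v⟫) = fderiv ℝ (fun x => (⟪c x, c x⟫ : ℝ)) q v

/-- `k` is a normal section with `(D_X (e - k))^⊥ = 0` for all tangent `X`. -/
def KField {n : ℕ} (ψ : Pl → Amb n) (e k : Pl → Amb n) : Prop :=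
  NormalField ψ k ∧ ∀ q (v : Pl), nproj ψ q (fderiv ℝ (fun x => e x - k x) q v) = 0

/-- `dψ_q v` is a (unit) asymptotic direction at `q`: `η(t) = α(t,t)` is an endpoint
(extreme point) of the segment into which the curvature ellipse degenerates. -/
def IsAsymptotic {n : ℕ} (ψ : Pl → Amb n) (q : Pl) (v : Pl) : Prop :=
  ‖fderiv ℝ ψ q v‖ = 1 ∧ sff ψ q v v ∈ Set.extremePoints ℝ (Ellipse ψ q)



/-! ### Auxiliary lemmas -/

section Aux

variable {n : ℕ}

lemma tproj_mem (ψ : Pl → Amb n) (q : Pl) (x : Amb n) : tproj ψ q x ∈ Tang ψ q :=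
  SetLike.coe_mem _

lemma nproj_mem (ψ : Pl → Amb n) (q : Pl) (x : Amb n) : nproj ψ q x ∈ (Tang ψ q)ᗮ :=
  Submodule.sub_starProjection_mem_orthogonal (K := Tang ψ q) x

lemma differentiable_fderiv_apply {E F : Type*} [NormedAddCommGroup E] [NormedSpace ℝ E]
    [NormedAddCommGroup F] [NormedSpace ℝ F]
    {G : E → F} (hG : ContDiff ℝ (⊤ : ℕ∞) G) (v : E) :
    Differentiable ℝ (fun x => fderiv ℝ G x v) := by
  have h1 : ContDiff ℝ (1 : ℕ) (fderiv ℝ G) :=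
    hG.fderiv_right (by decide)
  exact fun x =>
    ((h1.differentiable (by norm_num)) x).clm_apply (differentiableAt_const v)

lemma fderiv_fderiv_apply {E F : Type*} [NormedAddCommGroup E] [NormedSpace ℝ E]
    [NormedAddCommGroup F] [NormedSpace ℝ F]
    {G : E → F} (hG : ContDiff ℝ (⊤ : ℕ∞) G) (x v u : E) :
    fderiv ℝ (fun y => fderiv ℝ G y v) x u = fderiv ℝ (fderiv ℝ G) x u v := by
  have h1 : ContDiff ℝ (1 : ℕ) (fderiv ℝ G) :=
    hG.fderiv_right (by decide)
  rw [fderiv_clm_apply ((h1.differentiable (by norm_num)) x) (differentiableAt_const v)]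
  simp

lemma fderiv_fderiv_symm {E F : Type*} [NormedAddCommGroup E] [NormedSpace ℝ E]
    [NormedAddCommGroup F] [NormedSpace ℝ F]
    {G : E → F} (hG : ContDiff ℝ (⊤ : ℕ∞) G) (x v u : E) :
    fderiv ℝ (fun y => fderiv ℝ G y v) x u = fderiv ℝ (fun y => fderiv ℝ G y u) x v := by
  rw [fderiv_fderiv_apply hG, fderiv_fderiv_apply hG]
  exact (hG.contDiffAt.isSymmSndFDerivAt (by rw [minSmoothness_of_isRCLikeNormedField]; exact WithTop.coe_le_coe.2 le_top)) u v

end Aux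

/-- With `f = id + t·c - (1-t)·e` an immersion as in Theorem 5.2, whose
image is parametrized by `f` itself (so that the local inverse `φ` of `f` is the
identity in parameters and `dφ(df(dψ w)) = dψ w`), the second fundamental form `α̃` of
`f(M)` satisfies, for tangent vectors `X = dψ vX ∈ N_q f(M)`, `u = df(dψ w)`,
`v = df(dψ w') ∈ T_q f(M)`:
`⟨X, α̃(u, v)⟩ = -⟨v, α(X, dφ(u))⟩`, i.e. `⟨X, α̃(df Y, v)⟩ = -⟨v, α(X, Y)⟩`. -/
theorem statement_17 (ψ : Pl → Amb 4) (hψ : Immersion ψ)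
    (hflat : FlatSurface ψ) (hsem : Semiumbilical ψ)
    (c : Pl → Amb 4) (hc : NormalField ψ c) (hcg : CAG ψ c)
    (e : Pl → Amb 4) (he : EulerField ψ e)
    (t : ℝ)
    (f : Pl → Amb 4) (hf : f = fun x => ψ x + t • c x - (1 - t) • e x)
    (himm : ∀ q, Function.Injective (fderiv ℝ f q)) :
    ∀ (q : Pl) (vX w w' : Pl),
      (⟪fderiv ℝ ψ q vX, sff f q w w'⟫ : ℝ)
        = -(⟪fderiv ℝ f q w', sff ψ q vX w⟫ : ℝ) := by
  -- basic differentiability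
  have hψc : ContDiff ℝ (⊤ : ℕ∞) ψ := hψ.1
  have hcc : ContDiff ℝ (⊤ : ℕ∞) c := hc.1
  have hec : ContDiff ℝ (⊤ : ℕ∞) e := he.1.1
  have hfc : ContDiff ℝ (⊤ : ℕ∞) f := by
    rw [hf]; exact (hψc.add (hcc.const_smul t)).sub (hec.const_smul (1 - t))
  have hψd : Differentiable ℝ ψ := hψc.differentiable (by decide)
  have hcd : Differentiable ℝ c := hcc.differentiable (by decide)
  have hed : Differentiable ℝ e := hec.differentiable (by decide)
  -- expansion of the derivative of f
  have hfder : ∀ (x : Pl) (u : Pl),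
      fderiv ℝ f x u = fderiv ℝ ψ x u + t • fderiv ℝ c x u - (1 - t) • fderiv ℝ e x u := by
    intro x u
    rw [hf]
    rw [fderiv_fun_sub ((hψd x).fun_add ((hcd x).fun_const_smul t)) ((hed x).fun_const_smul (1 - t)),
      fderiv_fun_add (hψd x) ((hcd x).fun_const_smul t),
      fderiv_fun_const_smul (hcd x) t, fderiv_fun_const_smul (hed x) (1 - t)]
    rfl
  -- ⟪dψ a, Dc u⟫ = -⟪dψ u, dψ a⟫
  have hA : ∀ (x a u : Pl),
      (⟪fderiv ℝ ψ x a, fderiv ℝ c x u⟫ : ℝ) = -⟪fderiv ℝ ψ x u, fderiv ℝ ψ x a⟫ := by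
    intro x a u
    have hfun : (fun y => (⟪fderiv ℝ ψ y a, c y⟫ : ℝ)) = fun _ => (0 : ℝ) :=
      funext fun y => (Submodule.mem_orthogonal _ _).1 (hc.2 y) _ (LinearMap.mem_range.2 ⟨a, rfl⟩)
    have h0 : fderiv ℝ (fun y => (⟪fderiv ℝ ψ y a, c y⟫ : ℝ)) x u = 0 := by
      rw [hfun]; simp
    rw [fderiv_inner_apply ℝ (differentiable_fderiv_apply hψc a x) (hcd x)] at h0
    set Z := fderiv ℝ (fun y => fderiv ℝ ψ y a) x u with hZ
    have hsplit : Z = tproj ψ x Z + nproj ψ x Z := by simp [nproj]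
    have h1 : (⟪tproj ψ x Z, c x⟫ : ℝ) = 0 :=
      (Submodule.mem_orthogonal _ _).1 (hc.2 x) _ (tproj_mem ψ x Z)
    have h2 : (⟪nproj ψ x Z, c x⟫ : ℝ) = ⟪fderiv ℝ ψ x u, fderiv ℝ ψ x a⟫ := by
      rw [real_inner_comm]
      exact hcg x u a
    have h3 : (⟪Z, c x⟫ : ℝ) = ⟪fderiv ℝ ψ x u, fderiv ℝ ψ x a⟫ := by
      rw [hsplit, inner_add_left, h1, h2, zero_add]
    linarith [h0, h3]
  -- ⟪dψ a, De u⟫ = ⟪dψ a, dψ u⟫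
  have hB : ∀ (x a u : Pl),
      (⟪fderiv ℝ ψ x a, fderiv ℝ e x u⟫ : ℝ) = ⟪fderiv ℝ ψ x a, fderiv ℝ ψ x u⟫ := by
    intro x a u
    set Z := fderiv ℝ e x u with hZ
    have hsplit : Z = tproj ψ x Z + nproj ψ x Z := by simp [nproj]
    have h1 : (⟪fderiv ℝ ψ x a, nproj ψ x Z⟫ : ℝ) = 0 :=
      (Submodule.mem_orthogonal _ _).1 (nproj_mem ψ x Z) _ (LinearMap.mem_range.2 ⟨a, rfl⟩)
    calc (⟪fderiv ℝ ψ x a, Z⟫ : ℝ)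
        = ⟪fderiv ℝ ψ x a, tproj ψ x Z⟫ + ⟪fderiv ℝ ψ x a, nproj ψ x Z⟫ := by
          rw [← inner_add_right, ← hsplit]
      _ = ⟪fderiv ℝ ψ x a, fderiv ℝ ψ x u⟫ := by rw [he.2 x u, h1, add_zero]
  -- orthogonality: df ⟂ dψ
  have horth : ∀ (x v u : Pl), (⟪fderiv ℝ ψ x v, fderiv ℝ f x u⟫ : ℝ) = 0 := by
    intro x v u
    rw [hfder x u, inner_sub_right, inner_add_right, inner_smul_right, inner_smul_right,
      hA x v u, hB x v u, real_inner_comm (fderiv ℝ ψ x u)]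
    ring
  intro q vX w w'
  -- reduce the LHS
  have hZ'diff := differentiable_fderiv_apply hfc w'
  set Z' := fderiv ℝ (fun x => fderiv ℝ f x w') q w with hZ'
  have hLHS : (⟪fderiv ℝ ψ q vX, sff f q w w'⟫ : ℝ) = ⟪fderiv ℝ ψ q vX, Z'⟫ := by
    obtain ⟨u, hu⟩ := LinearMap.mem_range.1 (tproj_mem f q Z')
    have : (⟪fderiv ℝ ψ q vX, tproj f q Z'⟫ : ℝ) = 0 := by rw [← hu]; exact horth q vX u
    rw [sff]
    show (⟪fderiv ℝ ψ q vX, nproj f q Z'⟫ : ℝ) = _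
    rw [nproj, inner_sub_right, this, sub_zero]
  -- reduce the RHS
  set W := fderiv ℝ (fun x => fderiv ℝ ψ x w) q vX with hW
  have hRHS : (⟪fderiv ℝ f q w', sff ψ q vX w⟫ : ℝ) = ⟪fderiv ℝ f q w', W⟫ := by
    obtain ⟨u, hu⟩ := LinearMap.mem_range.1 (tproj_mem ψ q W)
    have : (⟪fderiv ℝ f q w', tproj ψ q W⟫ : ℝ) = 0 := by
      rw [← hu, real_inner_comm]; exact horth q u w'
    rw [sff]
    show (⟪fderiv ℝ f q w', nproj ψ q W⟫ : ℝ) = _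
    rw [nproj, inner_sub_right, this, sub_zero]
  -- product rule on the identically-zero inner product
  have hfun : (fun x => (⟪fderiv ℝ ψ x vX, fderiv ℝ f x w'⟫ : ℝ)) = fun _ => (0 : ℝ) :=
    funext fun x => horth x vX w'
  have h0 : fderiv ℝ (fun x => (⟪fderiv ℝ ψ x vX, fderiv ℝ f x w'⟫ : ℝ)) q w = 0 := by
    rw [hfun]; simp
  rw [fderiv_inner_apply ℝ (differentiable_fderiv_apply hψc vX q) (hZ'diff q)] at h0
  -- h0 : ⟪dψ vX, Z'⟫ + ⟪D_w(dψ vX), df w'⟫ = 0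
  have hsymm : fderiv ℝ (fun x => fderiv ℝ ψ x vX) q w = W := by
    rw [hW]; exact fderiv_fderiv_symm hψc q vX w
  rw [hsymm] at h0
  rw [hLHS, hRHS]
  have hcomm := real_inner_comm W (fderiv ℝ f q w')
  linarith [h0, hcomm]
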